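/- Let V be a real vector space of odd dimension 2n+1 with dual V*, and consider W = V ⊕ V* with its canonical split pairing. Let E ⊆ W be a 2-dimensional subspace with nondegenerate pairing of signature (1,1), and let L ⊆ (E^⊥) ⊗ ℂ be a maximal isotropic subspace with L ∩ conj(L) = 0. Set p_E = dim a(E) and t_L = codim_ℂ a(L) in V ⊗ ℂ, where a is the projection to the tangent factor. Then either p_E = 1 and 1 ≤ t_L ≤ n+1, or p_E = 2 and 1 ≤ t_L ≤ n. -/

import Mathlib

set_option maxSynthPendingDepth 3
set_option synthInstance.maxHeartbeats 1000000
noncomputable section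
open Module

/-- The canonical split pairing `⟨x+ξ, y+η⟩ = (ξ(y)+η(x))/2` on `V ⊕ V*`. -/
def pairW (V : Type*) [AddCommGroup V] [Module ℝ V] :
    LinearMap.BilinForm ℝ (V × Module.Dual ℝ V) :=
  LinearMap.mk₂ ℝ (fun x y => (x.2 y.1 + y.2 x.1) / 2)
    (by intros; simp [Prod.fst_add, Prod.snd_add]; ring)
    (by intros; simp [smul_eq_mul]; ring)
    (by intros; simp [Prod.fst_add, Prod.snd_add]; ring)
    (by intros; simp [smul_eq_mul]; ring)

open scoped TensorProduct

section Aux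
variable {M N : Type*} [AddCommGroup M] [Module ℝ M] [AddCommGroup N] [Module ℝ N]

/-- complex conjugation on `ℂ ⊗ M` -/
abbrev conjT (M : Type*) [AddCommGroup M] [Module ℝ M] : ℂ ⊗[ℝ] M →ₗ[ℝ] ℂ ⊗[ℝ] M :=
  TensorProduct.map Complex.conjAe.toLinearMap LinearMap.id

lemma conjT_conjT (x : ℂ ⊗[ℝ] M) : conjT M (conjT M x) = x := by
  induction x with
  | zero => simp
  | tmul c m => simp
  | add x y hx hy => simp [map_add, hx, hy]

lemma conjT_baseChange (f : M →ₗ[ℝ] N) (x : ℂ ⊗[ℝ] M) :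
    f.baseChange ℂ (conjT M x) = conjT N (f.baseChange ℂ x) := by
  induction x with
  | zero => simp
  | tmul c m => simp
  | add x y hx hy => simp [map_add, hx, hy]

lemma baseChange_le_ker {f : M →ₗ[ℝ] N} {p : Submodule ℝ M} (h : p ≤ LinearMap.ker f) :
    p.baseChange ℂ ≤ LinearMap.ker (f.baseChange ℂ) := by
  rw [Submodule.baseChange_eq_span, Submodule.span_le]
  rintro _ ⟨m, hm, rfl⟩
  simp [LinearMap.mem_ker.mp (h hm)]

lemma one_tmul_ne_zero {r : ℝ} (hr : r ≠ 0) : (1 : ℂ) ⊗ₜ[ℝ] r ≠ (0 : ℂ ⊗[ℝ] ℝ) := by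
  intro h
  have h2 : (TensorProduct.AlgebraTensorModule.rid ℝ ℂ ℂ) ((1:ℂ) ⊗ₜ[ℝ] r) = r • (1 : ℂ) :=
    TensorProduct.AlgebraTensorModule.rid_tmul (R := ℝ) (A := ℂ) (M := ℂ) r (1:ℂ)
  rw [h, LinearEquiv.map_zero] at h2
  have : (r : ℂ) = 0 := by simpa using h2.symm
  exact hr (by exact_mod_cast this)

end Aux

set_option maxHeartbeats 2000000 in
/-- bounds on the geometric type `(p_E, t_L)` of a generalized almost
contact structure on a `(2n+1)`-dimensional space. -/
theorem geometric_type_bounds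
    (n : ℕ) (V : Type*) [AddCommGroup V] [Module ℝ V] [FiniteDimensional ℝ V]
    (hdim : Module.finrank ℝ V = 2*n+1)
    (E : Submodule ℝ (V × Module.Dual ℝ V))
    -- the restriction of the pairing to `E` is nondegenerate of signature (1,1):
    (hsig : ∃ u v : V × Module.Dual ℝ V, u ∈ E ∧ v ∈ E ∧
      pairW V u u = 0 ∧ pairW V v v = 0 ∧ pairW V u v = 1/2 ∧
      E = Submodule.span ℝ {u, v})
    (L : Submodule ℂ (ℂ ⊗[ℝ] (V × Module.Dual ℝ V)))
    -- `L` lies in `E^⊥ ⊗ ℂ`: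
    (hLperp : L ≤ Submodule.baseChange ℂ ((pairW V).orthogonal E))
    -- `L` is isotropic of maximal dimension `2n`:
    (hLiso : ∀ u ∈ L, ∀ v ∈ L, ((pairW V).baseChange ℂ) u v = 0)
    (hLmax : Module.finrank ℂ L = 2*n)
    -- `L ∩ conj(L) = 0`:
    (hLconj : ∀ x ∈ L,
      (TensorProduct.map Complex.conjAe.toLinearMap
        (LinearMap.id : (V × Module.Dual ℝ V) →ₗ[ℝ] _)) x ∈ L → x = 0) :
    -- with `p_E = dim a(E)` and `t_L = codim_ℂ a(L)`:
    (Module.finrank ℝ (E.map (LinearMap.fst ℝ V (Module.Dual ℝ V))) = 1 ∧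
        1 ≤ (2*n+1) - Module.finrank ℂ
          (L.map ((LinearMap.fst ℝ V (Module.Dual ℝ V)).baseChange ℂ)) ∧
        (2*n+1) - Module.finrank ℂ
          (L.map ((LinearMap.fst ℝ V (Module.Dual ℝ V)).baseChange ℂ)) ≤ n+1)
    ∨
    (Module.finrank ℝ (E.map (LinearMap.fst ℝ V (Module.Dual ℝ V))) = 2 ∧
        1 ≤ (2*n+1) - Module.finrank ℂ
          (L.map ((LinearMap.fst ℝ V (Module.Dual ℝ V)).baseChange ℂ)) ∧
        (2*n+1) - Module.finrank ℂ
          (L.map ((LinearMap.fst ℝ V (Module.Dual ℝ V)).baseChange ℂ)) ≤ n) := by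
  classical
  obtain ⟨u, v, huE, hvE, huu, hvv, huv, hE⟩ := hsig
  have pair_apply : ∀ x y : V × Module.Dual ℝ V, pairW V x y = (x.2 y.1 + y.2 x.1) / 2 :=
    fun x y => rfl
  set a : (V × Module.Dual ℝ V) →ₗ[ℝ] V := LinearMap.fst ℝ V (Module.Dual ℝ V) with ha
  set aC : (ℂ ⊗[ℝ] (V × Module.Dual ℝ V)) →ₗ[ℂ] (ℂ ⊗[ℝ] V) := a.baseChange ℂ with haC
  set aE : Submodule ℝ V := E.map a with haE
  set p : ℕ := finrank ℝ aE with hp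
  -- dual dimension
  have hdualdim : finrank ℝ (Module.Dual ℝ V) = 2*n+1 := by
    rw [Subspace.dual_finrank_eq]; exact hdim
  have hWdim : finrank ℝ (V × Module.Dual ℝ V) = 2*(2*n+1) := by
    rw [Module.finrank_prod, hdim, hdualdim]; ring
  -- `aE = span {u.1, v.1}`
  have haEspan : aE = Submodule.span ℝ {u.1, v.1} := by
    rw [haE, hE, Submodule.map_span]
    congr 1
    rw [Set.image_insert_eq, Set.image_singleton]
    rfl
  -- p ≤ 2
  have hp2 : p ≤ 2 := by
    rw [hp, haEspan]
    refine le_trans (finrank_span_le_card _) ?_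
    rw [Set.toFinset_insert, Set.toFinset_singleton]
    exact le_trans (Finset.card_insert_le _ _) (by simp)
  -- 1 ≤ p
  have hne : u.1 ≠ 0 ∨ v.1 ≠ 0 := by
    by_contra h
    push_neg at h
    have h0 : pairW V u v = 0 := by rw [pair_apply, h.1, h.2]; simp
    rw [huv] at h0; norm_num at h0
  have hu1mem : u.1 ∈ aE := ⟨u, huE, rfl⟩
  have hv1mem : v.1 ∈ aE := ⟨v, hvE, rfl⟩
  have hp1 : 1 ≤ p := by
    rw [hp]
    refine Module.finrank_pos_iff_exists_ne_zero.mpr ?_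
    rcases hne with h | h
    · exact ⟨⟨u.1, hu1mem⟩, by simpa using h⟩
    · exact ⟨⟨v.1, hv1mem⟩, by simpa using h⟩
  -- the two linear functionals cutting out `E^⊥`
  set Bu : (V × Module.Dual ℝ V) →ₗ[ℝ] ℝ := pairW V u with hBu
  set Bv : (V × Module.Dual ℝ V) →ₗ[ℝ] ℝ := pairW V v with hBv
  have horthBu : (pairW V).orthogonal E ≤ LinearMap.ker Bu := by
    intro x hx
    have h1 := LinearMap.BilinForm.mem_orthogonal_iff.mp hx u huE
    exact LinearMap.mem_ker.mpr h1
  have horthBv : (pairW V).orthogonal E ≤ LinearMap.ker Bv := by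
    intro x hx
    have h1 := LinearMap.BilinForm.mem_orthogonal_iff.mp hx v hvE
    exact LinearMap.mem_ker.mpr h1
  have hLBu : L ≤ LinearMap.ker (Bu.baseChange ℂ) :=
    le_trans hLperp (baseChange_le_ker horthBu)
  have hLBv : L ≤ LinearMap.ker (Bv.baseChange ℂ) :=
    le_trans hLperp (baseChange_le_ker horthBv)
  -- the container `C` and the kernel part `K`
  set C : Submodule ℂ (ℂ ⊗[ℝ] (V × Module.Dual ℝ V)) :=
    (LinearMap.ker (Bu.baseChange ℂ) ⊓ LinearMap.ker (Bv.baseChange ℂ)) ⊓ LinearMap.ker aC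
    with hCdef
  set K : Submodule ℂ (ℂ ⊗[ℝ] (V × Module.Dual ℝ V)) := L ⊓ LinearMap.ker aC with hKdef
  have hKL : K ≤ L := inf_le_left
  have hKC : K ≤ C :=
    le_inf (le_inf (le_trans inf_le_left hLBu) (le_trans inf_le_left hLBv)) inf_le_right
  have hCconj : ∀ x ∈ C, conjT (V × Module.Dual ℝ V) x ∈ C := by
    rintro x ⟨⟨h1, h2⟩, h3⟩
    refine ⟨⟨?_, ?_⟩, ?_⟩
    · exact LinearMap.mem_ker.mpr
        (by rw [conjT_baseChange, LinearMap.mem_ker.mp h1, map_zero])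
    · exact LinearMap.mem_ker.mpr
        (by rw [conjT_baseChange, LinearMap.mem_ker.mp h2, map_zero])
    · exact LinearMap.mem_ker.mpr
        (by rw [haC, conjT_baseChange, ← haC, LinearMap.mem_ker.mp h3, map_zero])
  -- dimensions of the ambient tensor spaces
  have htW : finrank ℂ (ℂ ⊗[ℝ] (V × Module.Dual ℝ V)) = 2*(2*n+1) := by
    rw [Module.finrank_baseChange, hWdim]
  have htV : finrank ℂ (ℂ ⊗[ℝ] V) = 2*n+1 := by
    rw [Module.finrank_baseChange, hdim]
  have hsurj : Function.Surjective aC := by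
    have hc : ⇑(a.baseChange ℂ) = ⇑(a.lTensor ℂ) := LinearMap.baseChange_eq_ltensor a
    rw [haC, hc]
    exact LinearMap.lTensor_surjective ℂ (Prod.fst_surjective)
  have hkeraC : finrank ℂ (LinearMap.ker aC) = 2*n+1 := by
    have h1 := LinearMap.finrank_range_add_finrank_ker aC
    rw [LinearMap.range_eq_top.mpr hsurj, finrank_top, htV, htW] at h1
    omega
  -- the restriction of `(Bu, Bv)` to `ker aC`
  set Pq : (ℂ ⊗[ℝ] (V × Module.Dual ℝ V)) →ₗ[ℂ] (ℂ ⊗[ℝ] ℝ) × (ℂ ⊗[ℝ] ℝ) :=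
    (Bu.baseChange ℂ).prod (Bv.baseChange ℂ) with hPq
  set q : (LinearMap.ker aC) →ₗ[ℂ] (ℂ ⊗[ℝ] ℝ) × (ℂ ⊗[ℝ] ℝ) :=
    Pq.domRestrict (LinearMap.ker aC) with hq
  have hCle : C ≤ LinearMap.ker aC := inf_le_right
  have hkerq : LinearMap.ker q = C.comap (LinearMap.ker aC).subtype := by
    ext z
    simp only [hq, LinearMap.mem_ker, LinearMap.domRestrict_apply, Submodule.mem_comap,
      Submodule.subtype_apply, hCdef, Submodule.mem_inf, hPq, LinearMap.prod_apply,
      Prod.mk_eq_zero, LinearMap.mem_ker, Function.prod]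
    exact ⟨fun h => ⟨h, z.2⟩, fun h => h.1⟩
  have hfinC : finrank ℂ C + finrank ℂ (LinearMap.range q) = 2*n+1 := by
    have h1 := LinearMap.finrank_range_add_finrank_ker q
    have h2 : finrank ℂ (C.comap (LinearMap.ker aC).subtype) = finrank ℂ C :=
      LinearEquiv.finrank_eq (Submodule.comapSubtypeEquivOfLe hCle)
    rw [hkerq, h2, hkeraC] at h1
    omega
  -- generic elements of `ker aC` coming from covectors
  have hzmem : ∀ ξ : Module.Dual ℝ V,
      ((1:ℂ) ⊗ₜ[ℝ] ((0, ξ) : V × Module.Dual ℝ V)) ∈ LinearMap.ker aC := by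
    intro ξ
    rw [LinearMap.mem_ker, haC]
    have : a ((0, ξ) : V × Module.Dual ℝ V) = 0 := rfl
    rw [LinearMap.baseChange_tmul, this, TensorProduct.tmul_zero]
  have hBuval : ∀ ξ : Module.Dual ℝ V, Bu ((0, ξ) : V × Module.Dual ℝ V) = ξ u.1 / 2 := by
    intro ξ
    rw [hBu, pair_apply]
    simp
  have hBvval : ∀ ξ : Module.Dual ℝ V, Bv ((0, ξ) : V × Module.Dual ℝ V) = ξ v.1 / 2 := by
    intro ξ
    rw [hBv, pair_apply]
    simp
  have hqval : ∀ ξ : Module.Dual ℝ V,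
      q ⟨(1:ℂ) ⊗ₜ[ℝ] ((0, ξ) : V × Module.Dual ℝ V), hzmem ξ⟩ =
        ((1:ℂ) ⊗ₜ[ℝ] (ξ u.1 / 2), (1:ℂ) ⊗ₜ[ℝ] (ξ v.1 / 2)) := by
    intro ξ
    rw [hq, LinearMap.domRestrict_apply, hPq, LinearMap.prod_apply]
    simp only [Function.prod, LinearMap.baseChange_tmul, hBuval, hBvval]
  -- the range of `q` has dimension at least `p`
  have hrange : p ≤ finrank ℂ (LinearMap.range q) := by
    rcases Nat.lt_or_ge p 2 with hcase | hcase
    · -- it suffices to exhibit one nonzero value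
      obtain ⟨ξ, hξ⟩ : ∃ ξ : Module.Dual ℝ V, ξ u.1 ≠ 0 ∨ ξ v.1 ≠ 0 := by
        by_contra hcon
        push_neg at hcon
        rcases hne with h | h
        · exact h ((Module.forall_dual_apply_eq_zero_iff ℝ u.1).mp (fun φ => (hcon φ).1))
        · exact h ((Module.forall_dual_apply_eq_zero_iff ℝ v.1).mp (fun φ => (hcon φ).2))
      have hqz : q ⟨(1:ℂ) ⊗ₜ[ℝ] ((0, ξ) : V × Module.Dual ℝ V), hzmem ξ⟩ ≠ 0 := by
        rw [hqval ξ]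
        rcases hξ with h | h
        · exact fun hc => one_tmul_ne_zero (div_ne_zero h two_ne_zero) (congrArg Prod.fst hc)
        · exact fun hc => one_tmul_ne_zero (div_ne_zero h two_ne_zero) (congrArg Prod.snd hc)
      have hpos : 0 < finrank ℂ (LinearMap.range q) := by
        refine Module.finrank_pos_iff_exists_ne_zero.mpr
          ⟨⟨q ⟨(1:ℂ) ⊗ₜ[ℝ] ((0, ξ) : V × Module.Dual ℝ V), hzmem ξ⟩,
            LinearMap.mem_range_self q _⟩, ?_⟩
        simpa [ne_eq, Submodule.mk_eq_zero] using hqz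
      omega
    · have hp2' : p = 2 := by omega
      have hsingle : ∀ w : V, finrank ℝ (Submodule.span ℝ ({w} : Set V)) ≤ 1 := by
        intro w
        refine le_trans (finrank_span_le_card _) ?_
        rw [Set.toFinset_singleton]
        simp
      have hnm1 : u.1 ∉ Submodule.span ℝ ({v.1} : Set V) := by
        intro hmem
        have hle : aE ≤ Submodule.span ℝ ({v.1} : Set V) := by
          rw [haEspan, Submodule.span_le]
          rintro x hx
          rcases Set.mem_insert_iff.mp hx with rfl | hx
          · exact hmem
          · rw [Set.mem_singleton_iff] at hx
            subst hx
            exact Submodule.subset_span rfl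
        have h1 : p ≤ finrank ℝ (Submodule.span ℝ ({v.1} : Set V)) :=
          hp ▸ Submodule.finrank_mono hle
        have h2 := hsingle v.1
        omega
      have hnm2 : v.1 ∉ Submodule.span ℝ ({u.1} : Set V) := by
        intro hmem
        have hle : aE ≤ Submodule.span ℝ ({u.1} : Set V) := by
          rw [haEspan, Submodule.span_le]
          rintro x hx
          rcases Set.mem_insert_iff.mp hx with rfl | hx
          · exact Submodule.subset_span rfl
          · rw [Set.mem_singleton_iff] at hx
            subst hx
            exact hmem
        have h1 : p ≤ finrank ℝ (Submodule.span ℝ ({u.1} : Set V)) :=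
          hp ▸ Submodule.finrank_mono hle
        have h2 := hsingle u.1
        omega
      obtain ⟨ξ1, hξ1u, hξ1map⟩ :=
        Submodule.exists_dual_map_eq_bot_of_notMem hnm1 inferInstance
      obtain ⟨ξ2, hξ2v, hξ2map⟩ :=
        Submodule.exists_dual_map_eq_bot_of_notMem hnm2 inferInstance
      have hξ1v : ξ1 v.1 = 0 := by
        have hm : ξ1 v.1 ∈ (Submodule.span ℝ ({v.1} : Set V)).map ξ1 :=
          ⟨v.1, Submodule.subset_span rfl, rfl⟩
        rw [hξ1map] at hm
        exact (Submodule.mem_bot ℝ).mp hm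
      have hξ2u : ξ2 u.1 = 0 := by
        have hm : ξ2 u.1 ∈ (Submodule.span ℝ ({u.1} : Set V)).map ξ2 :=
          ⟨u.1, Submodule.subset_span rfl, rfl⟩
        rw [hξ2map] at hm
        exact (Submodule.mem_bot ℝ).mp hm
      set y1 := q ⟨(1:ℂ) ⊗ₜ[ℝ] ((0, ξ1) : V × Module.Dual ℝ V), hzmem ξ1⟩ with hy1def
      set y2 := q ⟨(1:ℂ) ⊗ₜ[ℝ] ((0, ξ2) : V × Module.Dual ℝ V), hzmem ξ2⟩ with hy2def
      have hy1 : y1 = ((1:ℂ) ⊗ₜ[ℝ] (ξ1 u.1 / 2), 0) := by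
        rw [hy1def, hqval ξ1, hξ1v]
        norm_num
      have hy2 : y2 = (0, (1:ℂ) ⊗ₜ[ℝ] (ξ2 v.1 / 2)) := by
        rw [hy2def, hqval ξ2, hξ2u]
        norm_num
      have hli : LinearIndependent ℂ ![y1, y2] := by
        rw [linearIndependent_fin2]
        constructor
        · show ¬ (![y1, y2] 1 = 0)
          simp only [Matrix.cons_val_one, Matrix.head_cons]
          rw [hy2]
          exact fun hc =>
            one_tmul_ne_zero (div_ne_zero hξ2v two_ne_zero) (congrArg Prod.snd hc)
        · intro c hc
          simp only [Matrix.cons_val_one, Matrix.head_cons, Matrix.cons_val_zero] at hc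
          have hfst := congrArg Prod.fst hc
          rw [hy1, hy2] at hfst
          simp only [Prod.smul_mk, smul_zero] at hfst
          exact one_tmul_ne_zero (div_ne_zero hξ1u two_ne_zero) hfst.symm
      have hspan : finrank ℂ (Submodule.span ℂ (Set.range ![y1, y2])) = 2 := by
        rw [finrank_span_eq_card hli]
        simp
      have hsle : Submodule.span ℂ (Set.range ![y1, y2]) ≤ LinearMap.range q := by
        rw [Submodule.span_le]
        rintro x ⟨i, rfl⟩
        fin_cases i
        · simp only [Matrix.cons_val_zero]
          exact LinearMap.mem_range_self q _
        · simp only [Matrix.cons_val_one, Matrix.head_cons]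
          exact LinearMap.mem_range_self q _
      have hmono := Submodule.finrank_mono hsle
      omega
  -- conjugation doubling: `2 * dim K ≤ 2 * dim C`
  set σe : (ℂ ⊗[ℝ] (V × Module.Dual ℝ V)) ≃ₗ[ℝ] (ℂ ⊗[ℝ] (V × Module.Dual ℝ V)) :=
    LinearEquiv.ofInvolutive (conjT (V × Module.Dual ℝ V)) conjT_conjT with hσe
  set Kr : Submodule ℝ (ℂ ⊗[ℝ] (V × Module.Dual ℝ V)) := K.restrictScalars ℝ with hKr
  set Kσ : Submodule ℝ (ℂ ⊗[ℝ] (V × Module.Dual ℝ V)) :=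
    Kr.map (σe : (ℂ ⊗[ℝ] (V × Module.Dual ℝ V)) →ₗ[ℝ] (ℂ ⊗[ℝ] (V × Module.Dual ℝ V)))
    with hKσ
  have hσapp : ∀ x, σe x = conjT (V × Module.Dual ℝ V) x := fun x => rfl
  have hdisj : Kr ⊓ Kσ = ⊥ := by
    rw [eq_bot_iff]
    rintro x ⟨hx1, hx2⟩
    obtain ⟨y, hy, rfl⟩ := hx2
    rw [Submodule.mem_bot]
    have hyL : y ∈ L := hKL hy
    have hxL : (σe : _ →ₗ[ℝ] _) y ∈ L := hKL hx1
    refine hLconj _ hxL ?_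
    have : conjT (V × Module.Dual ℝ V) ((σe : _ →ₗ[ℝ] _) y) = y := conjT_conjT y
    rw [show (TensorProduct.map Complex.conjAe.toLinearMap
      (LinearMap.id : (V × Module.Dual ℝ V) →ₗ[ℝ] _)) ((σe : _ →ₗ[ℝ] _) y) =
      conjT (V × Module.Dual ℝ V) ((σe : _ →ₗ[ℝ] _) y) from rfl, this]
    exact hyL
  have hsup : Kr ⊔ Kσ ≤ C.restrictScalars ℝ := by
    refine sup_le (fun x hx => hKC hx) ?_
    rintro x ⟨y, hy, rfl⟩
    exact hCconj y (hKC hy)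
  have hKfin : finrank ℝ Kr = 2 * finrank ℂ K := by
    have h1 : finrank ℝ ℂ * finrank ℂ K = finrank ℝ K := Module.finrank_mul_finrank ℝ ℂ K
    have h2 : finrank ℝ Kr = finrank ℝ K :=
      LinearEquiv.finrank_eq (LinearEquiv.restrictScalars ℝ (Submodule.restrictScalarsEquiv ℝ ℂ _ K))
    rw [h2, ← h1, Complex.finrank_real_complex]
  have hCrfin : finrank ℝ (C.restrictScalars ℝ) = 2 * finrank ℂ C := by
    have h1 : finrank ℝ ℂ * finrank ℂ C = finrank ℝ C := Module.finrank_mul_finrank ℝ ℂ C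
    have h2 : finrank ℝ (C.restrictScalars ℝ) = finrank ℝ C :=
      LinearEquiv.finrank_eq (LinearEquiv.restrictScalars ℝ (Submodule.restrictScalarsEquiv ℝ ℂ _ C))
    rw [h2, ← h1, Complex.finrank_real_complex]
  have hKσfin : finrank ℝ Kσ = finrank ℝ Kr := LinearEquiv.finrank_map_eq σe Kr
  have hsum := Submodule.finrank_sup_add_finrank_inf_eq Kr Kσ
  rw [hdisj, finrank_bot] at hsum
  have hmono2 := Submodule.finrank_mono hsup
  have hdouble : 2 * finrank ℂ K + p ≤ 2*n+1 := by omega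
  -- rank–nullity for `a(L)`
  set qa : L →ₗ[ℂ] (ℂ ⊗[ℝ] V) := aC.domRestrict L with hqa
  have hkerqa : LinearMap.ker qa = K.comap L.subtype := by
    ext z
    simp only [hqa, LinearMap.mem_ker, LinearMap.domRestrict_apply, Submodule.mem_comap,
      Submodule.subtype_apply, hKdef, Submodule.mem_inf]
    exact ⟨fun h => ⟨z.2, h⟩, fun h => h.2⟩
  have hrg : LinearMap.range qa = L.map aC := LinearMap.range_domRestrict L aC
  have hRN := LinearMap.finrank_range_add_finrank_ker qa
  have hkk : finrank ℂ (K.comap L.subtype) = finrank ℂ K :=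
    LinearEquiv.finrank_eq (Submodule.comapSubtypeEquivOfLe hKL)
  rw [hkerqa, hkk, hrg, hLmax] at hRN
  -- conclusion
  have hpcase : p = 1 ∨ p = 2 := by omega
  rcases hpcase with hcase1 | hcase2
  · left
    exact ⟨hcase1, by omega, by omega⟩
  · right
    exact ⟨hcase2, by omega, by omega⟩
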